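/- Let n ≥ 1 and q ≥ 1 be integers, let a_1, …, a_n be pairwise distinct nonzero complex numbers, and let R > max_{1≤k≤n} |a_k| be real. Then (1/(2πi)) ∮_{|z|=R} e^z / (z^q · ∏_{k=1}^n (z − a_k)) dz = Σ_{k=1}^n [ e^{a_k} − Σ_{j=0}^{q−1} a_k^j / j! ] / ( a_k^q · ∏_{ℓ≠k} (a_k − a_ℓ) ), where the contour integral is taken counterclockwise over the circle of radius R centered at the origin. -/

import Mathlib

set_option maxHeartbeats 1000000

open Complex Finset

-- Aux 2: Cauchy formula
lemma circleIntegral_exp_div_sub {R : ℝ} {w : ℂ} (hw : ‖w‖ < R) :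
    (∮ z in C(0, R), Complex.exp z / (z - w)) = (2 * Real.pi * Complex.I) * Complex.exp w := by
  have hw' : w ∈ Metric.ball (0:ℂ) R := by
    simpa [Metric.mem_ball, Complex.dist_eq] using hw
  have h := (Complex.differentiable_exp.differentiableOn (s := Metric.closedBall (0:ℂ) R)
    ).circleIntegral_sub_inv_smul hw'
  have hfun : (fun z : ℂ => (z - w)⁻¹ • Complex.exp z)
      = fun z : ℂ => Complex.exp z / (z - w) := by
    funext z; rw [smul_eq_mul, div_eq_inv_mul]
  rw [hfun] at h
  rw [h, smul_eq_mul]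

-- Aux 3: sum splitting
lemma circleIntegral_finset_sum {ι : Type*} (s : Finset ι) (f : ι → ℂ → ℂ) {c : ℂ} {R : ℝ}
    (h : ∀ i ∈ s, CircleIntegrable (f i) c R) :
    (∮ z in C(c, R), ∑ i ∈ s, f i z) = ∑ i ∈ s, ∮ z in C(c, R), f i z := by
  simp only [circleIntegral, smul_sum]
  rw [intervalIntegral.integral_finset_sum]
  intro i hi
  exact (circleIntegrable_iff R).mp (h i hi)

-- Aux 4: algebraic decomposition
lemma key_decomp (q : ℕ) (a z E : ℂ) (ha : a ≠ 0) (hz : z ≠ 0) (hza : z - a ≠ 0) :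
    E / (z ^ q * (z - a)) =
      (a ^ q)⁻¹ * (E / (z - a)) -
        ∑ j ∈ Finset.range q, (a ^ j * (a ^ q)⁻¹) * (E / z ^ (j + 1)) := by
  have hgeom : (∑ j ∈ Finset.range q, a ^ j * z ^ (q - 1 - j)) * (a - z) = a ^ q - z ^ q :=
    geom_sum₂_mul a z q
  have hzq : z ^ q ≠ 0 := pow_ne_zero _ hz
  have haq : a ^ q ≠ 0 := pow_ne_zero _ ha
  have hsum : ∑ j ∈ Finset.range q, (a ^ j * (a ^ q)⁻¹) * (E / z ^ (j + 1))
      = (∑ j ∈ Finset.range q, a ^ j * z ^ (q - 1 - j)) * E / (a ^ q * z ^ q) := by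
    rw [Finset.sum_mul, Finset.sum_div]
    refine Finset.sum_congr rfl fun j hj => ?_
    have hj' : j + 1 + (q - 1 - j) = q := by
      have := Finset.mem_range.mp hj; omega
    have hzz : z ^ (j + 1) * z ^ (q - 1 - j) = z ^ q := by rw [← pow_add, hj']
    rw [← hzz]
    have hz1 : z ^ (j+1) ≠ 0 := pow_ne_zero _ hz
    have hz2 : z ^ (q-1-j) ≠ 0 := pow_ne_zero _ hz
    field_simp
  rw [hsum]
  set S := ∑ j ∈ Finset.range q, a ^ j * z ^ (q - 1 - j) with hS
  rw [show z ^ q * (z - a) = (z - a) * z ^ q by ring]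
  generalize hZ : z ^ q = Z at hgeom hzq ⊢
  generalize hA : a ^ q = A at hgeom haq ⊢
  field_simp
  linear_combination (-E) * hgeom

-- Aux 1: ∮ e^z/z^(m+1) = 2πi/m!
lemma circleIntegral_exp_div_pow {R : ℝ} (hR : 0 < R) (m : ℕ) :
    (∮ z in C(0, R), Complex.exp z / z ^ (m + 1))
      = (2 * Real.pi * Complex.I) * ((m.factorial : ℂ))⁻¹ := by
  lift R to NNReal using hR.le
  rw [NNReal.coe_pos] at hR
  have h1 : HasFPowerSeriesAt Complex.exp (cauchyPowerSeries Complex.exp 0 (R:ℝ)) 0 :=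
    ((Complex.differentiable_exp.differentiableOn).hasFPowerSeriesOnBall hR).hasFPowerSeriesAt
  have h2 : HasFPowerSeriesAt Complex.exp (NormedSpace.expSeries ℂ ℂ) 0 := by
    rw [Complex.exp_eq_exp_ℂ]
    exact NormedSpace.exp_hasFPowerSeriesAt_zero
  have h3 : cauchyPowerSeries Complex.exp 0 (R:ℝ) = NormedSpace.expSeries ℂ ℂ :=
    h1.eq_formalMultilinearSeries h2
  have h5 : (cauchyPowerSeries Complex.exp 0 (R:ℝ) m fun _ => (1:ℂ))
      = NormedSpace.expSeries ℂ ℂ m fun _ => (1:ℂ) := by rw [h3]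
  rw [cauchyPowerSeries_apply, NormedSpace.expSeries_apply_eq] at h5
  have hfun : (fun z : ℂ => ((1:ℂ) / (z - 0)) ^ m • ((z - 0)⁻¹ • Complex.exp z))
      = fun z : ℂ => Complex.exp z / z ^ (m + 1) := by
    funext z
    simp only [sub_zero, one_div, smul_eq_mul, pow_succ]
    by_cases hz : z = 0
    · simp [hz]
    · field_simp
      rw [← mul_pow, one_div_mul_cancel hz, one_pow]
  rw [hfun] at h5
  have h2pi : (2 * (Real.pi:ℂ) * Complex.I) ≠ 0 := by
    simp [Real.pi_ne_zero, Complex.I_ne_zero]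
  rw [smul_eq_mul, smul_eq_mul, one_pow, mul_one,
    inv_mul_eq_iff_eq_mul₀ h2pi] at h5
  rw [h5]

/-- Residue evaluation of the rank-one HCIZ contour integral (Appendix A): for pairwise
distinct nonzero `a_1,…,a_n` and `R > max |a_k|`,
`(1/(2πi)) ∮_{|z|=R} e^z/(z^q ∏_k (z−a_k)) dz
  = Σ_k [e^{a_k} − Σ_{j<q} a_k^j/j!] / (a_k^q ∏_{ℓ≠k} (a_k − a_ℓ))`. -/
theorem residue_evaluation (n q : ℕ) (hn : 1 ≤ n) (hq : 1 ≤ q)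
    (a : Fin n → ℂ) (ha0 : ∀ k, a k ≠ 0) (hinj : Function.Injective a)
    (R : ℝ) (hR : ∀ k, ‖a k‖ < R) :
    (1 / (2 * (Real.pi : ℂ) * Complex.I)) *
        (∮ z in C(0, R), Complex.exp z / (z ^ q * ∏ k, (z - a k)))
      = ∑ k, (Complex.exp (a k) - ∑ j ∈ Finset.range q, a k ^ j / j.factorial) /
          (a k ^ q * ∏ ℓ ∈ Finset.univ.erase k, (a k - a ℓ)) := by
  classical
  have hR0 : (0:ℝ) < R := lt_of_le_of_lt (norm_nonneg _) (hR ⟨0, hn⟩)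
  have h2pi : (2 * (Real.pi:ℂ) * Complex.I) ≠ 0 := by
    simp [Real.pi_ne_zero, Complex.I_ne_zero]
  set c : Fin n → ℂ := fun k => (∏ ℓ ∈ Finset.univ.erase k, (a k - a ℓ))⁻¹ with hc
  set F : Fin n → ℂ → ℂ := fun k z =>
    c k * ((a k ^ q)⁻¹ * (Complex.exp z / (z - a k)) -
      ∑ j ∈ Finset.range q, (a k ^ j * (a k ^ q)⁻¹) * (Complex.exp z / z ^ (j + 1))) with hF
  -- points on the sphere avoid all poles
  have hsph : ∀ z ∈ Metric.sphere (0:ℂ) R, z ≠ 0 ∧ ∀ k, z - a k ≠ 0 := by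
    intro z hz
    rw [Metric.mem_sphere, Complex.dist_eq, sub_zero] at hz
    refine ⟨?_, ?_⟩
    · intro h0
      rw [h0] at hz; simp at hz; exact absurd hz.symm (ne_of_gt hR0)
    · intro k hk
      have hzk : z = a k := sub_eq_zero.mp hk
      rw [hzk] at hz
      exact absurd hz (ne_of_lt (hR k))
  -- pointwise decomposition on the sphere
  have hEq : Set.EqOn (fun z => Complex.exp z / (z ^ q * ∏ k, (z - a k)))
      (fun z => ∑ k, F k z) (Metric.sphere (0:ℂ) R) := by
    intro z hz
    obtain ⟨hz0, hzk⟩ := hsph z hz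
    have hvs : Set.InjOn a (Finset.univ : Finset (Fin n)) := fun x _ y _ h => hinj h
    have hne : (Finset.univ : Finset (Fin n)).Nonempty := ⟨⟨0, hn⟩, Finset.mem_univ _⟩
    have hx : ∀ i ∈ (Finset.univ : Finset (Fin n)), z ≠ a i := fun i _ h =>
      hzk i (by rw [h, sub_self])
    have hlag := Lagrange.eval_interpolate_not_at_node (s := Finset.univ) (v := a) (x := z) 1 hx
    rw [Lagrange.interpolate_one hvs hne, Polynomial.eval_one, Lagrange.eval_nodal] at hlag
    simp only [Pi.one_apply, mul_one] at hlag
    have hnw : ∀ i : Fin n, c i = Lagrange.nodalWeight Finset.univ a i := by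
      intro i
      simp [hc, Lagrange.nodalWeight, ← Finset.prod_inv_distrib]
    have hPF : (∏ k, (z - a k))⁻¹ = ∑ k, c k * (z - a k)⁻¹ := by
      refine inv_eq_of_mul_eq_one_right ?_
      simp only [hnw]
      exact hlag.symm
    have hmain : Complex.exp z / (z ^ q * ∏ k, (z - a k))
        = ∑ k, c k * (Complex.exp z / (z ^ q * (z - a k))) := by
      rw [div_eq_mul_inv, mul_inv, hPF, Finset.mul_sum, Finset.mul_sum]
      refine Finset.sum_congr rfl fun k _ => ?_
      rw [div_eq_mul_inv, mul_inv]
      ring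
    simp only [hmain]
    refine Finset.sum_congr rfl fun k _ => ?_
    rw [key_decomp q (a k) z (Complex.exp z) (ha0 k) hz0 (hzk k)]
  -- continuity / integrability facts
  have hci : ∀ g : ℂ → ℂ, ContinuousOn g (Metric.sphere (0:ℂ) R) → CircleIntegrable g 0 R :=
    fun g hg => hg.circleIntegrable hR0.le
  have hcontA : ∀ k : Fin n,
      ContinuousOn (fun z => Complex.exp z / (z - a k)) (Metric.sphere (0:ℂ) R) := by
    intro k
    exact Complex.continuous_exp.continuousOn.div
      ((continuous_id.sub continuous_const).continuousOn)
      (fun z hz => (hsph z hz).2 k)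
  have hcontB : ∀ j : ℕ,
      ContinuousOn (fun z => Complex.exp z / z ^ (j + 1)) (Metric.sphere (0:ℂ) R) := by
    intro j
    exact Complex.continuous_exp.continuousOn.div
      ((continuous_pow (j+1)).continuousOn)
      (fun z hz => pow_ne_zero _ (hsph z hz).1)
  have hcontInner : ∀ k : Fin n,
      ContinuousOn (fun z => (a k ^ q)⁻¹ * (Complex.exp z / (z - a k)) -
        ∑ j ∈ Finset.range q, (a k ^ j * (a k ^ q)⁻¹) * (Complex.exp z / z ^ (j + 1)))
        (Metric.sphere (0:ℂ) R) := by
    intro k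
    refine ContinuousOn.sub (continuousOn_const.mul (hcontA k)) ?_
    exact continuousOn_finset_sum _ fun j _ => continuousOn_const.mul (hcontB j)
  -- split the integral
  have hsplit : (∮ z in C(0, R), Complex.exp z / (z ^ q * ∏ k, (z - a k)))
      = ∑ k, ∮ z in C(0, R), F k z := by
    rw [circleIntegral.integral_congr hR0.le hEq]
    exact circleIntegral_finset_sum _ _ (fun k _ =>
      hci (F k) (continuousOn_const.mul (hcontInner k)))
  -- evaluate each piece
  have hFk : ∀ k : Fin n, (∮ z in C(0, R), F k z)
      = c k * ((a k ^ q)⁻¹ * ((2 * Real.pi * Complex.I) * Complex.exp (a k)) -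
          ∑ j ∈ Finset.range q,
            (a k ^ j * (a k ^ q)⁻¹) * ((2 * Real.pi * Complex.I) * ((j.factorial : ℂ))⁻¹)) := by
    intro k
    have e0 : (∮ z in C(0, R), F k z)
        = c k • ∮ z in C(0, R), ((a k ^ q)⁻¹ * (Complex.exp z / (z - a k)) -
            ∑ j ∈ Finset.range q, (a k ^ j * (a k ^ q)⁻¹) * (Complex.exp z / z ^ (j + 1))) := by
      rw [← circleIntegral.integral_smul]
      rfl
    rw [e0, circleIntegral.integral_sub
        (hci (fun z => (a k ^ q)⁻¹ * (Complex.exp z / (z - a k))) (continuousOn_const.mul (hcontA k)))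
        (hci (fun z => ∑ j ∈ Finset.range q, (a k ^ j * (a k ^ q)⁻¹) * (Complex.exp z / z ^ (j + 1))) (continuousOn_finset_sum _ fun j _ => continuousOn_const.mul (hcontB j)))]
    have e1 : (∮ z in C(0, R), (a k ^ q)⁻¹ * (Complex.exp z / (z - a k)))
        = (a k ^ q)⁻¹ * ((2 * Real.pi * Complex.I) * Complex.exp (a k)) := by
      rw [show (fun z => (a k ^ q)⁻¹ * (Complex.exp z / (z - a k)))
          = fun z => (a k ^ q)⁻¹ • (Complex.exp z / (z - a k)) from rfl,
        circleIntegral.integral_smul, circleIntegral_exp_div_sub (hR k), smul_eq_mul]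
    have e2 : (∮ z in C(0, R), ∑ j ∈ Finset.range q,
          (a k ^ j * (a k ^ q)⁻¹) * (Complex.exp z / z ^ (j + 1)))
        = ∑ j ∈ Finset.range q,
            (a k ^ j * (a k ^ q)⁻¹) * ((2 * Real.pi * Complex.I) * ((j.factorial : ℂ))⁻¹) := by
      rw [circleIntegral_finset_sum _ (fun j z => (a k ^ j * (a k ^ q)⁻¹) * (Complex.exp z / z ^ (j + 1))) (fun j _ => hci _ (continuousOn_const.mul (hcontB j)))]
      refine Finset.sum_congr rfl fun j _ => ?_
      rw [show (fun z => (a k ^ j * (a k ^ q)⁻¹) * (Complex.exp z / z ^ (j + 1)))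
          = fun z => (a k ^ j * (a k ^ q)⁻¹) • (Complex.exp z / z ^ (j + 1)) from rfl,
        circleIntegral.integral_smul, circleIntegral_exp_div_pow hR0 j, smul_eq_mul]
    rw [e1, e2, smul_eq_mul]
  -- final algebra
  rw [hsplit, Finset.mul_sum]
  refine Finset.sum_congr rfl fun k _ => ?_
  rw [hFk k]
  have hprod : (∏ ℓ ∈ Finset.univ.erase k, (a k - a ℓ)) ≠ 0 := by
    refine Finset.prod_ne_zero_iff.mpr fun ℓ hℓ => sub_ne_zero.mpr fun h => ?_
    exact (Finset.mem_erase.mp hℓ).1.symm (hinj h.symm).symm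
  have haq : a k ^ q ≠ 0 := pow_ne_zero _ (ha0 k)
  have hck : c k = (∏ ℓ ∈ Finset.univ.erase k, (a k - a ℓ))⁻¹ := rfl
  have hsum2 : (∑ j ∈ Finset.range q,
        (a k ^ j * (a k ^ q)⁻¹) * ((2 * Real.pi * Complex.I) * ((j.factorial : ℂ))⁻¹))
      = (2 * Real.pi * Complex.I) * ((a k ^ q)⁻¹ *
          ∑ j ∈ Finset.range q, a k ^ j / (j.factorial : ℂ)) := by
    rw [Finset.mul_sum, Finset.mul_sum]
    refine Finset.sum_congr rfl fun j _ => ?_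
    rw [div_eq_mul_inv]; ring
  rw [hsum2, hck]
  field_simp
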